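/- Let Y be a two-level ±1 design that is an OA(N,k,2,t) with N = λ·2^t and k ≥ t + 2, and let j be an integer with t + 1 ≤ j ≤ k. If λ is even, or if the binomial coefficient C(j−1, j−t−1) is even, then the integer Σ_{l ⊆ Fin k, |l| = j} J(l)² (which equals N²·A_j(Y)) is divisible by 2^{2t+2}. -/

import Mathlib

/-- All entries of `Y` are `1` or `-1`. -/
def isPM {N k : ℕ} (Y : Fin N → Fin k → ℤ) : Prop :=
  ∀ i j, Y i j = 1 ∨ Y i j = -1

/-- `Y` is a two-level orthogonal array OA(N,k,2,t): for every `t`-element set `T` of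
columns and every `±1` sign pattern `ε`, the number of rows matching `ε` on `T`
equals `N / 2^t` (equivalently, the count times `2^t` equals `N`). -/
def isOA2 (N k t : ℕ) (Y : Fin N → Fin k → ℤ) : Prop :=
  ∀ T : Finset (Fin k), T.card = t →
    ∀ ε : Fin k → ℤ, (∀ j, ε j = 1 ∨ ε j = -1) →
      (Finset.univ.filter (fun i : Fin N => ∀ j ∈ T, Y i j = ε j)).card * 2 ^ t = N

/-- The `J`-characteristic of the set of columns `l`. -/
def Jchar {N k : ℕ} (Y : Fin N → Fin k → ℤ) (l : Finset (Fin k)) : ℤ :=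
  ∑ i : Fin N, ∏ j ∈ l, Y i j

/-- Alternating partial sum of binomial coefficients. -/
lemma alt_sum_choose (s : ℕ) : ∀ t : ℕ,
    ∑ i ∈ Finset.range (t + 1), (-1 : ℤ) ^ i * ((s + 1).choose i) =
      (-1 : ℤ) ^ t * (s.choose t) := by
  intro t
  induction t with
  | zero => simp
  | succ t ih =>
    rw [Finset.sum_range_succ, ih, Nat.choose_succ_succ]
    push_cast
    ring

/-- Strength `t` implies strength `s` for all `s ≤ t`: counting rows matching a
pattern on `S` with `S.card + d = t`. -/
lemma count_lemma {N k t : ℕ} {Y : Fin N → Fin k → ℤ} (hpm : isPM Y) (hoa : isOA2 N k t Y)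
    (htk : t ≤ k) :
    ∀ d (S : Finset (Fin k)) (ε : Fin k → ℤ), (∀ j, ε j = 1 ∨ ε j = -1) →
      S.card + d = t →
      (Finset.univ.filter (fun i : Fin N => ∀ j ∈ S, Y i j = ε j)).card * 2 ^ S.card = N := by
  intro d
  induction d with
  | zero =>
    intro S ε hε hS
    rw [Nat.add_zero] at hS
    rw [hS]
    exact hoa S hS ε hε
  | succ d ih =>
    intro S ε hε hS
    have hcard : S.card < k := by omega
    obtain ⟨c, hc⟩ : ∃ c, c ∉ S := by
      by_contra h
      push_neg at h
      have : S = Finset.univ := Finset.eq_univ_iff_forall.mpr h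
      rw [this, Finset.card_univ, Fintype.card_fin] at hcard
      omega
    set ε' := Function.update ε c (-ε c) with hε'def
    have hε' : ∀ j, ε' j = 1 ∨ ε' j = -1 := by
      intro j'
      by_cases hj : j' = c
      · subst hj
        rcases hε j' with h | h <;> simp [hε'def, h]
      · rw [hε'def, Function.update_of_ne hj]
        exact hε j'
    have hcardins : (insert c S).card + d = t := by
      rw [Finset.card_insert_of_notMem hc]; omega
    have h1 := ih (insert c S) ε hε hcardins
    have h2 := ih (insert c S) ε' hε' hcardins
    -- partition the rows matching ε on S by the value at column c
    have hsplit :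
        (Finset.univ.filter (fun i : Fin N => ∀ j ∈ insert c S, Y i j = ε j)).card
        + (Finset.univ.filter (fun i : Fin N => ∀ j ∈ insert c S, Y i j = ε' j)).card
        = (Finset.univ.filter (fun i : Fin N => ∀ j ∈ S, Y i j = ε j)).card := by
      have e1 : (Finset.univ.filter (fun i : Fin N => ∀ j ∈ insert c S, Y i j = ε j))
          = (Finset.univ.filter (fun i : Fin N => ∀ j ∈ S, Y i j = ε j)).filter
              (fun i => Y i c = ε c) := by
        ext i
        simp only [Finset.mem_filter, Finset.mem_univ, true_and, Finset.mem_insert]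
        constructor
        · intro h
          exact ⟨fun j' hj' => h j' (Or.inr hj'), h c (Or.inl rfl)⟩
        · rintro ⟨h1, h2⟩ j' hj'
          rcases hj' with rfl | hj'
          · exact h2
          · exact h1 j' hj'
      have e2 : (Finset.univ.filter (fun i : Fin N => ∀ j ∈ insert c S, Y i j = ε' j))
          = (Finset.univ.filter (fun i : Fin N => ∀ j ∈ S, Y i j = ε j)).filter
              (fun i => ¬ Y i c = ε c) := by
        ext i
        simp only [Finset.mem_filter, Finset.mem_univ, true_and, Finset.mem_insert]
        constructor
        · intro h
          constructor
          · intro j' hj'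
            have := h j' (Or.inr hj')
            rwa [hε'def, Function.update_of_ne (ne_of_mem_of_not_mem hj' hc)] at this
          · have := h c (Or.inl rfl)
            rw [hε'def, Function.update_self] at this
            rw [this]
            rcases hε c with h' | h' <;> rw [h'] <;> norm_num
        · rintro ⟨h1, h2⟩ j' hj'
          rcases hj' with rfl | hj'
          · rw [hε'def, Function.update_self]
            rcases hpm i j' with h' | h' <;> rcases hε j' with h'' | h'' <;>
              rw [h', h''] <;> rw [h', h''] at h2 <;> simp_all
          · rw [hε'def, Function.update_of_ne (ne_of_mem_of_not_mem hj' hc)]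
            exact h1 j' hj'
      rw [e1, e2]
      exact Finset.card_filter_add_card_filter_not _
    have hpow : 2 ^ (insert c S).card = 2 ^ S.card * 2 := by
      rw [Finset.card_insert_of_notMem hc, pow_succ]
    rw [hpow] at h1 h2
    have goal2 : (Finset.univ.filter (fun i : Fin N => ∀ j ∈ S, Y i j = ε j)).card
        * 2 ^ S.card * 2 = N * 2 := by
      calc (Finset.univ.filter (fun i : Fin N => ∀ j ∈ S, Y i j = ε j)).card
            * 2 ^ S.card * 2
          = ((Finset.univ.filter (fun i : Fin N => ∀ j ∈ insert c S, Y i j = ε j)).card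
            + (Finset.univ.filter (fun i : Fin N => ∀ j ∈ insert c S, Y i j = ε' j)).card)
            * 2 ^ S.card * 2 := by rw [hsplit]
        _ = (Finset.univ.filter (fun i : Fin N => ∀ j ∈ insert c S, Y i j = ε j)).card
              * (2 ^ S.card * 2)
            + (Finset.univ.filter (fun i : Fin N => ∀ j ∈ insert c S, Y i j = ε' j)).card
              * (2 ^ S.card * 2) := by ring
        _ = N + N := by rw [h1, h2]
        _ = N * 2 := by ring
    exact Nat.eq_of_mul_eq_mul_right (by norm_num) goal2

/-- The key divisibility: each `J`-characteristic on a set of `j ≥ t+1` columns is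
divisible by `2^(t+1)` provided `lam * (j-1).choose t` is even. -/
lemma Jchar_dvd {N k t lam : ℕ} {Y : Fin N → Fin k → ℤ} (hpm : isPM Y) (hoa : isOA2 N k t Y)
    (htk : t ≤ k) (hN : N = lam * 2 ^ t) (l : Finset (Fin k)) (hl : t + 1 ≤ l.card)
    (heven : Even (lam * (l.card - 1).choose t)) :
    (2 ^ (t + 1) : ℤ) ∣ Jchar Y l := by
  classical
  -- expand the product
  have expand : Jchar Y l = ∑ S ∈ l.powerset, ∑ i : Fin N, ∏ j ∈ S, (Y i j - 1) := by
    rw [Jchar, Finset.sum_comm]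
    congr 1
    ext i
    rw [Finset.prod_congr rfl (fun j _ => by ring : ∀ j ∈ l, Y i j = (Y i j - 1) + 1),
      Finset.prod_add]
    simp
  -- evaluate each inner sum as a count
  have inner_eq : ∀ S : Finset (Fin k),
      (∑ i : Fin N, ∏ j ∈ S, (Y i j - 1)) =
        (-2 : ℤ) ^ S.card *
          ((Finset.univ.filter (fun i : Fin N => ∀ j ∈ S, Y i j = (-1 : ℤ))).card : ℤ) := by
    intro S
    have hterm : ∀ i : Fin N, ∏ j ∈ S, (Y i j - 1) =
        if (∀ j ∈ S, Y i j = (-1 : ℤ)) then (-2 : ℤ) ^ S.card else 0 := by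
      intro i
      by_cases h : ∀ j ∈ S, Y i j = (-1 : ℤ)
      · rw [if_pos h]
        calc ∏ j ∈ S, (Y i j - 1)
            = ∏ _j ∈ S, (-2 : ℤ) :=
              Finset.prod_congr rfl (fun j hj => by rw [h j hj]; ring)
          _ = (-2 : ℤ) ^ S.card := Finset.prod_const _
      · rw [if_neg h]
        push_neg at h
        obtain ⟨j', hj', hne⟩ := h
        have : Y i j' = 1 := (hpm i j').resolve_right hne
        exact Finset.prod_eq_zero hj' (by rw [this]; ring)
    calc (∑ i : Fin N, ∏ j ∈ S, (Y i j - 1))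
        = ∑ i : Fin N, (if (∀ j ∈ S, Y i j = (-1 : ℤ)) then (-2 : ℤ) ^ S.card else 0) := by
          exact Finset.sum_congr rfl (fun i _ => hterm i)
      _ = ∑ i ∈ Finset.univ.filter (fun i : Fin N => ∀ j ∈ S, Y i j = (-1 : ℤ)),
            (-2 : ℤ) ^ S.card := (Finset.sum_filter _ _).symm
      _ = _ := by rw [Finset.sum_const, nsmul_eq_mul, mul_comm]
  -- for sets of card ≤ t, the count lemma applies
  have small : ∀ S : Finset (Fin k), S.card ≤ t →
      (∑ i : Fin N, ∏ j ∈ S, (Y i j - 1)) = (-1 : ℤ) ^ S.card * (lam * 2 ^ t) := by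
    intro S hS
    have hc := count_lemma hpm hoa htk (t - S.card) S (fun _ => -1)
      (fun _ => Or.inr rfl) (by omega)
    have hc2 : (Finset.univ.filter (fun i : Fin N => ∀ j ∈ S, Y i j = (-1:ℤ))).card
        * 2 ^ S.card = lam * 2 ^ t := hc.trans hN
    have hc3 : ((Finset.univ.filter (fun i : Fin N => ∀ j ∈ S, Y i j = (-1:ℤ))).card : ℤ)
        * 2 ^ S.card = (lam : ℤ) * 2 ^ t := by exact_mod_cast hc2
    rw [inner_eq S]
    calc (-2 : ℤ) ^ S.card *
          ((Finset.univ.filter (fun i : Fin N => ∀ j ∈ S, Y i j = (-1:ℤ))).card : ℤ)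
        = (-1 : ℤ) ^ S.card *
          (((Finset.univ.filter (fun i : Fin N => ∀ j ∈ S, Y i j = (-1:ℤ))).card : ℤ)
            * 2 ^ S.card) := by rw [show ((-2 : ℤ)) = (-1) * 2 from by ring, mul_pow]; ring
      _ = (-1 : ℤ) ^ S.card * ((lam : ℤ) * 2 ^ t) := by rw [hc3]
  -- decompose the powerset sum by cardinality
  have decomp : Jchar Y l =
      ∑ i ∈ Finset.range (l.card + 1), ∑ S ∈ Finset.powersetCard i l,
        ∑ r : Fin N, ∏ j ∈ S, (Y r j - 1) := by
    rw [expand, Finset.sum_powerset]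
  -- split the range
  set jc := l.card with hjc
  have hsplitrange :
      ∑ i ∈ Finset.range (jc + 1), (∑ S ∈ Finset.powersetCard i l,
          ∑ r : Fin N, ∏ j ∈ S, (Y r j - 1))
      = (∑ i ∈ Finset.range (t + 1), ∑ S ∈ Finset.powersetCard i l,
          ∑ r : Fin N, ∏ j ∈ S, (Y r j - 1))
        + ∑ i ∈ Finset.Ico (t + 1) (jc + 1), ∑ S ∈ Finset.powersetCard i l,
          ∑ r : Fin N, ∏ j ∈ S, (Y r j - 1) := by
    rw [Finset.range_eq_Ico, Finset.range_eq_Ico]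
    exact (Finset.sum_Ico_consecutive _ (Nat.zero_le (t + 1)) (show t + 1 ≤ jc + 1 by omega)).symm
  -- low part
  have low : (∑ i ∈ Finset.range (t + 1), ∑ S ∈ Finset.powersetCard i l,
      ∑ r : Fin N, ∏ j ∈ S, (Y r j - 1))
      = (lam : ℤ) * 2 ^ t * ((-1 : ℤ) ^ t * ((jc - 1).choose t : ℤ)) := by
    have : ∀ i ∈ Finset.range (t + 1), (∑ S ∈ Finset.powersetCard i l,
        ∑ r : Fin N, ∏ j ∈ S, (Y r j - 1))
        = (-1 : ℤ) ^ i * (jc.choose i : ℤ) * ((lam : ℤ) * 2 ^ t) := by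
      intro i hi
      rw [Finset.mem_range] at hi
      have hsum : ∀ S ∈ Finset.powersetCard i l,
          (∑ r : Fin N, ∏ j ∈ S, (Y r j - 1)) = (-1 : ℤ) ^ i * ((lam : ℤ) * 2 ^ t) := by
        intro S hS
        rw [Finset.mem_powersetCard] at hS
        rw [small S (by omega), hS.2]
      rw [Finset.sum_congr rfl hsum, Finset.sum_const, Finset.card_powersetCard,
        nsmul_eq_mul]
      push_cast
      ring
    rw [Finset.sum_congr rfl this, ← Finset.sum_mul]
    have hjc1 : jc = (jc - 1) + 1 := by omega
    rw [show (∑ i ∈ Finset.range (t + 1), (-1 : ℤ) ^ i * (jc.choose i : ℤ))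
        = (-1 : ℤ) ^ t * ((jc - 1).choose t : ℤ) from by
      rw [hjc1]; exact alt_sum_choose (jc - 1) t]
    ring
  -- divisibility of the low part
  obtain ⟨m, hm⟩ := heven
  have hlowdvd : (2 ^ (t + 1) : ℤ) ∣
      (lam : ℤ) * 2 ^ t * ((-1 : ℤ) ^ t * ((jc - 1).choose t : ℤ)) := by
    refine ⟨(-1 : ℤ) ^ t * m, ?_⟩
    have hm2 : lam * (jc - 1).choose t = 2 * m := by omega
    have : (lam : ℤ) * ((jc - 1).choose t : ℤ) = 2 * m := by exact_mod_cast hm2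
    calc (lam : ℤ) * 2 ^ t * ((-1 : ℤ) ^ t * ((jc - 1).choose t : ℤ))
        = ((lam : ℤ) * ((jc - 1).choose t : ℤ)) * 2 ^ t * (-1 : ℤ) ^ t := by ring
      _ = (2 * m) * 2 ^ t * (-1 : ℤ) ^ t := by rw [this]
      _ = 2 ^ (t + 1) * ((-1 : ℤ) ^ t * m) := by rw [pow_succ]; ring
  -- divisibility of the high part
  have hhighdvd : (2 ^ (t + 1) : ℤ) ∣
      ∑ i ∈ Finset.Ico (t + 1) (jc + 1), ∑ S ∈ Finset.powersetCard i l,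
        ∑ r : Fin N, ∏ j ∈ S, (Y r j - 1) := by
    apply Finset.dvd_sum
    intro i hi
    rw [Finset.mem_Ico] at hi
    apply Finset.dvd_sum
    intro S hS
    rw [Finset.mem_powersetCard] at hS
    rw [inner_eq S]
    apply Dvd.dvd.mul_right
    rw [show ((-2 : ℤ)) = (-1) * 2 from by ring, mul_pow]
    apply Dvd.dvd.mul_left
    exact pow_dvd_pow 2 (by omega)
  rw [decomp, hsplitrange, low]
  exact dvd_add hlowdvd hhighdvd

theorem stmt5 (N k t lam j : ℕ) (Y : Fin N → Fin k → ℤ)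
    (hpm : isPM Y) (hoa : isOA2 N k t Y)
    (ht1 : 1 ≤ t) (htk : t ≤ k) (hN : N = lam * 2 ^ t)
    (hk : t + 2 ≤ k) (hj1 : t + 1 ≤ j) (hj2 : j ≤ k)
    (hcase : Even lam ∨ Even ((j - 1).choose (j - t - 1))) :
    (2 ^ (2 * t + 2) : ℤ) ∣
      ∑ l ∈ Finset.univ.filter (fun l : Finset (Fin k) => l.card = j),
        (Jchar Y l) ^ 2 := by
  have hchoose : (j - 1).choose (j - t - 1) = (j - 1).choose t := by
    have h1 : j - t - 1 = (j - 1) - t := by omega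
    rw [h1]
    exact Nat.choose_symm (by omega)
  have heven : Even (lam * (j - 1).choose t) := by
    rcases hcase with h | h
    · exact h.mul_right _
    · rw [hchoose] at h
      exact h.mul_left _
  apply Finset.dvd_sum
  intro l hl
  rw [Finset.mem_filter] at hl
  have hdvd : (2 ^ (t + 1) : ℤ) ∣ Jchar Y l :=
    Jchar_dvd hpm hoa htk hN l (by omega) (by rw [hl.2]; exact heven)
  obtain ⟨m, hm⟩ := hdvd
  exact ⟨m ^ 2, by rw [hm]; rw [show 2 * t + 2 = (t + 1) + (t + 1) from by ring, pow_add]; ring⟩
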